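/- For every two-qubit Schmidt-correlated state ρ with coefficients c1, c2, c4, there exist 2×2 unitary matrices U1, U2 and real numbers λ1, λ2, λ4 ≥ 0 with λ1 ≥ λ4, λ1 + λ4 = 1 and λ1·λ4 ≥ λ2², such that (U1⊗U2) ρ (U1⊗U2)† = λ1|00⟩⟨00| + λ2|00⟩⟨11| + λ2|11⟩⟨00| + λ4|11⟩⟨11|. (This matrix is called the standard form of ρ.) -/

import Mathlib

open Matrix Kronecker

/-- The two-qubit Schmidt-correlated state
`ρ = c1|00⟩⟨00| + c2|00⟩⟨11| + conj(c2)|11⟩⟨00| + c4|11⟩⟨11|`,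
written in the product basis of `ℂ² ⊗ ℂ²` indexed by `Fin 2 × Fin 2`. -/
noncomputable def scState (c1 c4 : ℝ) (c2 : ℂ) :
    Matrix (Fin 2 × Fin 2) (Fin 2 × Fin 2) ℂ :=
  Matrix.of fun p q =>
    if p = (0, 0) ∧ q = (0, 0) then (c1 : ℂ)
    else if p = (0, 0) ∧ q = (1, 1) then c2
    else if p = (1, 1) ∧ q = (0, 0) then (starRingEnd ℂ) c2
    else if p = (1, 1) ∧ q = (1, 1) then (c4 : ℂ)
    else 0

set_option maxHeartbeats 1600000 in
/-- **Theorem 1 (standard form).** Every two-qubit Schmidt-correlated state can be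
brought by a local unitary transformation to the standard form with nonnegative
coefficients `λ1 ≥ λ4`, `λ1 + λ4 = 1`, `λ1·λ4 ≥ λ2²`. -/
theorem sc_standard_form (c1 c4 : ℝ) (c2 : ℂ)
    (hc1 : 0 ≤ c1) (hc4 : 0 ≤ c4) (hsum : c1 + c4 = 1)
    (hc2 : ‖c2‖ ^ 2 ≤ c1 * c4) :
    ∃ U1 U2 : Matrix (Fin 2) (Fin 2) ℂ,
      U1 ∈ Matrix.unitaryGroup (Fin 2) ℂ ∧ U2 ∈ Matrix.unitaryGroup (Fin 2) ℂ ∧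
      ∃ l1 l2 l4 : ℝ, 0 ≤ l1 ∧ 0 ≤ l2 ∧ 0 ≤ l4 ∧ l4 ≤ l1 ∧ l1 + l4 = 1 ∧
        l2 ^ 2 ≤ l1 * l4 ∧
        (U1 ⊗ₖ U2) * scState c1 c4 c2 * (U1 ⊗ₖ U2)ᴴ = scState l1 l4 (l2 : ℂ) := by
  set r : ℝ := ‖c2‖ with hr
  have hr0 : 0 ≤ r := norm_nonneg c2
  -- the phase
  rcases le_total c4 c1 with hcase | hcase
  · -- no swap needed
    set a : ℂ := if c2 = 0 then 1 else (starRingEnd ℂ) c2 / r with hadef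
    have ha1 : a * (starRingEnd ℂ) a = 1 := by
      by_cases h : c2 = 0
      · simp [hadef, h]
      · have : (r:ℂ) ≠ 0 := by
          simpa [hr, norm_eq_zero] using h
        have hkey : (starRingEnd ℂ) c2 * c2 = (r:ℂ) * (r:ℂ) := by
          rw [mul_comm, Complex.mul_conj, Complex.normSq_eq_norm_sq, ← hr]; push_cast; ring
        rw [hadef, if_neg h, map_div₀, Complex.conj_ofReal, Complex.conj_conj, div_mul_div_comm,
          hkey, div_self (mul_ne_zero this this)]
    have ha1' : a * star a = 1 := ha1
    have hfix : ∀ z : ℂ, a * (z * (starRingEnd ℂ) a) = z := fun z => by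
      rw [mul_comm z, ← mul_assoc, ha1, one_mul]
    have hfix' : ∀ z : ℂ, a * ((starRingEnd ℂ) a * z) = z := fun z => by
      rw [← mul_assoc, ha1, one_mul]
    have ha2 : a * c2 = (r : ℂ) := by
      by_cases h : c2 = 0
      · simp [hadef, h, hr]
      · have hrne : (r:ℂ) ≠ 0 := by
          simpa [hr, norm_eq_zero] using h
        have hkey : (starRingEnd ℂ) c2 * c2 = (r:ℂ) * (r:ℂ) := by
          rw [mul_comm, Complex.mul_conj, Complex.normSq_eq_norm_sq, ← hr]; push_cast; ring
        rw [hadef, if_neg h, div_mul_eq_mul_div, hkey, mul_div_assoc, div_self hrne, mul_one]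
    refine ⟨!![a, 0; 0, 1], !![1, 0; 0, 1], ?_, ?_, c1, r, c4, hc1, hr0, hc4, hcase, hsum, hc2, ?_⟩
    · rw [Matrix.mem_unitaryGroup_iff]
      ext i j
      fin_cases i <;> fin_cases j <;>
        simp [Matrix.mul_apply, Fin.sum_univ_two, conjTranspose_apply, ha1, ha1', Complex.ext_iff]
    · rw [Matrix.mem_unitaryGroup_iff]
      ext i j
      fin_cases i <;> fin_cases j <;>
        simp [Matrix.mul_apply, Fin.sum_univ_two, conjTranspose_apply, Complex.ext_iff]
    · ext ⟨i, j⟩ ⟨k, l⟩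
      have hc2' : (starRingEnd ℂ) c2 * (starRingEnd ℂ) a = (r:ℂ) := by
        have := congrArg (starRingEnd ℂ) ha2
        simpa [mul_comm] using this
      fin_cases i <;> fin_cases j <;> fin_cases k <;> fin_cases l <;>
        simp [Matrix.mul_apply, Fintype.sum_prod_type, Fin.sum_univ_two, scState,
          kroneckerMap_apply, conjTranspose_apply, ha1, ha1', ha2, hc2', hfix, hfix', mul_assoc]
  · -- swap
    set a : ℂ := if c2 = 0 then 1 else c2 / r with hadef
    have ha1 : a * (starRingEnd ℂ) a = 1 := by
      by_cases h : c2 = 0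
      · simp [hadef, h]
      · have : (r:ℂ) ≠ 0 := by
          simpa [hr, norm_eq_zero] using h
        have hkey : c2 * (starRingEnd ℂ) c2 = (r:ℂ) * (r:ℂ) := by
          rw [Complex.mul_conj, Complex.normSq_eq_norm_sq, ← hr]; push_cast; ring
        rw [hadef, if_neg h, map_div₀, Complex.conj_ofReal, div_mul_div_comm,
          hkey, div_self (mul_ne_zero this this)]
    have ha1' : a * star a = 1 := ha1
    have hfix : ∀ z : ℂ, a * (z * (starRingEnd ℂ) a) = z := fun z => by
      rw [mul_comm z, ← mul_assoc, ha1, one_mul]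
    have hfix' : ∀ z : ℂ, a * ((starRingEnd ℂ) a * z) = z := fun z => by
      rw [← mul_assoc, ha1, one_mul]
    have ha2 : a * (starRingEnd ℂ) c2 = (r : ℂ) := by
      by_cases h : c2 = 0
      · simp [hadef, h, hr]
      · have hrne : (r:ℂ) ≠ 0 := by
          simpa [hr, norm_eq_zero] using h
        have hkey : c2 * (starRingEnd ℂ) c2 = (r:ℂ) * (r:ℂ) := by
          rw [Complex.mul_conj, Complex.normSq_eq_norm_sq, ← hr]; push_cast; ring
        rw [hadef, if_neg h, div_mul_eq_mul_div, hkey, mul_div_assoc, div_self hrne, mul_one]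
    refine ⟨!![0, a; 1, 0], !![0, 1; 1, 0], ?_, ?_, c4, r, c1, hc4, hr0, hc1, hcase, by linarith, by rw [mul_comm]; exact hc2, ?_⟩
    · rw [Matrix.mem_unitaryGroup_iff]
      ext i j
      fin_cases i <;> fin_cases j <;>
        simp [Matrix.mul_apply, Fin.sum_univ_two, conjTranspose_apply, ha1, ha1', Complex.ext_iff]
    · rw [Matrix.mem_unitaryGroup_iff]
      ext i j
      fin_cases i <;> fin_cases j <;>
        simp [Matrix.mul_apply, Fin.sum_univ_two, conjTranspose_apply, Complex.ext_iff]
    · ext ⟨i, j⟩ ⟨k, l⟩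
      have hc2' : c2 * (starRingEnd ℂ) a = (r : ℂ) := by
        have := congrArg (starRingEnd ℂ) ha2
        simpa [mul_comm] using this
      fin_cases i <;> fin_cases j <;> fin_cases k <;> fin_cases l <;>
        simp [Matrix.mul_apply, Fintype.sum_prod_type, Fin.sum_univ_two, scState,
          kroneckerMap_apply, conjTranspose_apply, ha1, ha1', ha2, hc2', hfix, hfix', mul_assoc]
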